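/- If ψ : ℤ → ℂ is a positive definite sequence supported in [-N, N], then there exists a sequence θ : ℤ → ℂ supported in [0, N] with ψ = θ ⋆ θ̃, i.e., ψ(n) = ∑_{k ∈ ℤ} θ(k) · conj(θ(k - n)) for all n ∈ ℤ. -/

import Mathlib

open Complex ComplexOrder Finset Polynomial Filter Topology

noncomputable section

set_option maxHeartbeats 1000000

/-- A function on an abelian group is positive definite if all the
associated quadratic forms are nonnegative (as complex numbers, i.e.
real and nonnegative). -/
def IsPosDef {G : Type*} [AddCommGroup G] (f : G → ℂ) : Prop :=
  ∀ (n : ℕ) (x : Fin n → G) (c : Fin n → ℂ),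
    0 ≤ ∑ j, ∑ k, c j * (starRingEnd ℂ) (c k) * f (x j - x k)

lemma conj_symm {ψ : ℤ → ℂ} (hψ : IsPosDef ψ) (n : ℤ) : ψ (-n) = (starRingEnd ℂ) (ψ n) := by
  have h1 := hψ 1 ![0] ![1]
  have h2 := hψ 2 ![0, n] ![1, 1]
  have h3 := hψ 2 ![0, n] ![1, Complex.I]
  simp [Fin.sum_univ_two, Fin.sum_univ_one] at h1 h2 h3
  rw [Complex.le_def] at h1 h2 h3
  have e1 : (ψ 0).im = 0 := h1.2.symm
  have e2 := h2.2
  have e3 := h3.2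
  simp [Complex.add_im, Complex.mul_im, e1] at e2 e3
  rw [Complex.ext_iff]
  constructor
  · simp only [Complex.conj_re]; linarith
  · simp only [Complex.conj_im]; linarith

lemma count_pairs (M : ℕ) (n : ℤ) :
    ((range M).filter (fun j : ℕ => n ≤ (j:ℤ) ∧ (j:ℤ) ≤ n + M - 1)).card = M - n.natAbs := by
  rw [← Finset.card_range (M - n.natAbs)]
  refine Finset.card_nbij' (i := fun j => ((j:ℤ) - max n 0).toNat)
    (j := fun i => ((i:ℤ) + max n 0).toNat) ?_ ?_ ?_ ?_ <;>
    intro a ha <;> simp_all [Finset.mem_filter, Finset.mem_range] <;> omega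

lemma double_sum_eq (M : ℕ) (G : ℤ → ℂ) :
    ∑ j ∈ range M, ∑ k ∈ range M, G ((j:ℤ) - k)
      = ∑ n ∈ Icc (-(M:ℤ)+1) ((M:ℤ)-1), ((M - n.natAbs : ℕ) : ℂ) * G n := by
  have h1 : ∀ j ∈ range M, ∑ k ∈ range M, G ((j:ℤ) - k)
      = ∑ n ∈ Icc ((j:ℤ)-M+1) (j:ℤ), G n := by
    intro j hj
    refine Finset.sum_nbij' (i := fun k => (j:ℤ) - k) (j := fun n => ((j:ℤ) - n).toNat) ?_ ?_ ?_ ?_ ?_ <;>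
      intro a ha <;> simp_all [Finset.mem_Icc, Finset.mem_range] <;> omega
  rw [Finset.sum_congr rfl h1]
  have h2 : ∀ j ∈ range M, ∑ n ∈ Icc ((j:ℤ)-M+1) (j:ℤ), G n
      = ∑ n ∈ Icc (-(M:ℤ)+1) ((M:ℤ)-1), if n ≤ (j:ℤ) ∧ (j:ℤ) ≤ n + M - 1 then G n else 0 := by
    intro j hj
    rw [← Finset.sum_filter]
    apply Finset.sum_congr _ (fun _ _ => rfl)
    simp only [Finset.mem_range] at hj
    ext n
    simp only [Finset.mem_filter, Finset.mem_Icc]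
    omega
  rw [Finset.sum_congr rfl h2, Finset.sum_comm]
  apply Finset.sum_congr rfl
  intro n hn
  rw [Finset.sum_ite, Finset.sum_const_zero, add_zero, Finset.sum_const, ← count_pairs M n,
    nsmul_eq_mul]

lemma T_nonneg {N : ℕ} {ψ : ℤ → ℂ} (hψ : IsPosDef ψ)
    (hsupp : ∀ n : ℤ, (N : ℤ) < |n| → ψ n = 0) (t : ℝ) :
    0 ≤ ∑ n ∈ Icc (-(N:ℤ)) (N:ℤ), ψ n * Complex.exp (n * t * Complex.I) := by
  set G : ℤ → ℂ := fun n => ψ n * Complex.exp (n * t * Complex.I) with hG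
  have hGsupp : ∀ n : ℤ, (N : ℤ) < |n| → G n = 0 := by
    intro n hn; simp [hG, hsupp n hn]
  set T : ℂ := ∑ n ∈ Icc (-(N:ℤ)) (N:ℤ), G n with hT
  set S : ℂ := ∑ n ∈ Icc (-(N:ℤ)) (N:ℤ), (n.natAbs : ℂ) * G n with hS
  have stepA : ∀ M : ℕ, N + 1 ≤ M → 0 ≤ (M:ℂ) * T - S := by
    intro M hM
    have h := hψ M (fun j => (j:ℤ)) (fun j => Complex.exp ((j:ℤ) * t * Complex.I))
    have hconv : ∀ j k : Fin M,
        Complex.exp ((j:ℤ) * t * Complex.I) * (starRingEnd ℂ) (Complex.exp ((k:ℤ) * t * Complex.I))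
          * ψ ((j:ℤ) - k) = G ((j:ℤ) - k) := by
      intro j k
      have harg : (((j:ℤ):ℂ) * t * Complex.I) + (starRingEnd ℂ) (((k:ℤ):ℂ) * t * Complex.I)
          = ((((j:ℤ) - (k:ℤ)):ℤ):ℂ) * t * Complex.I := by
        simp only [map_mul, Complex.conj_I, Complex.conj_ofReal, map_intCast]
        push_cast
        ring
      rw [← Complex.exp_conj, ← Complex.exp_add, harg]
      simp only [hG]
      ring
    simp only [hconv] at h
    have e1 : ∀ x : ℤ, ∑ k : Fin M, G (x - ((k:ℕ):ℤ)) = ∑ k ∈ range M, G (x - (k:ℤ)) :=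
      fun x => Fin.sum_univ_eq_sum_range (fun k => G (x - (k:ℤ))) M
    simp only [e1] at h
    rw [Fin.sum_univ_eq_sum_range (fun j => ∑ k ∈ range M, G ((j:ℤ) - (k:ℤ)))] at h
    rw [double_sum_eq M G] at h
    have hsub : ∑ n ∈ Icc (-(M:ℤ)+1) ((M:ℤ)-1), ((M - n.natAbs : ℕ) : ℂ) * G n
        = ∑ n ∈ Icc (-(N:ℤ)) (N:ℤ), ((M - n.natAbs : ℕ) : ℂ) * G n := by
      refine (Finset.sum_subset ?_ ?_).symm
      · intro x hx; simp only [Finset.mem_Icc] at *; omega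
      · intro x hx hnx
        simp only [Finset.mem_Icc] at hx hnx
        rw [hGsupp x (by rcases abs_cases x with ⟨h1,h2⟩ | ⟨h1,h2⟩ <;> omega), mul_zero]
    rw [hsub] at h
    have hrw : ∑ n ∈ Icc (-(N:ℤ)) (N:ℤ), ((M - n.natAbs : ℕ) : ℂ) * G n = (M:ℂ) * T - S := by
      rw [hT, hS, Finset.mul_sum, ← Finset.sum_sub_distrib]
      apply Finset.sum_congr rfl
      intro n hn
      simp only [Finset.mem_Icc] at hn
      have : (n.natAbs : ℤ) ≤ (M:ℤ) := by omega
      rw [Nat.cast_sub (by exact_mod_cast this)]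
      ring
    rwa [hrw] at h
  have hA1 := stepA (N+1) le_rfl
  have hA2 := stepA (N+2) (by omega)
  rw [Complex.le_def] at hA1 hA2
  have hTim : T.im = 0 := by
    have e1 := hA1.2
    have e2 := hA2.2
    simp only [Complex.sub_im, Complex.mul_im, Complex.zero_im, Complex.natCast_re,
      Complex.natCast_im] at e1 e2
    push_cast at e1 e2
    nlinarith [e1, e2]
  have hTre : 0 ≤ T.re := by
    by_contra hneg
    push_neg at hneg
    obtain ⟨M0, hM0⟩ := exists_nat_gt (S.re / T.re)
    set M := max M0 (N+1) with hM
    have hMge : (N:ℕ) + 1 ≤ M := le_max_right _ _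
    have h := (stepA M hMge)
    rw [Complex.le_def] at h
    have hre := h.1
    simp only [Complex.sub_re, Complex.mul_re, Complex.zero_re, Complex.natCast_re,
      Complex.natCast_im] at hre
    rw [hTim] at hre
    have hM0le : (S.re / T.re) < (M:ℝ) := lt_of_lt_of_le hM0 (by exact_mod_cast le_max_left _ _)
    have := (div_lt_iff_of_neg hneg).mp hM0le
    simp at hre
    linarith
  rw [Complex.le_def]
  exact ⟨hTre, hTim.symm⟩

lemma sum_Icc_int (M : ℕ) (F : ℤ → ℂ) :
    ∑ k ∈ Icc (0:ℤ) (M:ℤ), F k = ∑ i ∈ range (M+1), F (i:ℤ) := by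
  refine Finset.sum_nbij' (i := fun k => k.toNat) (j := fun i => (i:ℤ)) ?_ ?_ ?_ ?_ ?_ <;>
    simp_all [Finset.mem_Icc, Finset.mem_range] <;> omega

lemma sum_Icc_shift (N : ℕ) (F : ℤ → ℂ) :
    ∑ n ∈ Icc (-(N:ℤ)) (N:ℤ), F n = ∑ m ∈ range (2*N+1), F ((m:ℤ) - N) := by
  rw [← sum_Icc_int (2*N) (fun k => F (k - N))]
  refine Finset.sum_nbij' (i := fun n => n + N) (j := fun k => k - N) ?_ ?_ ?_ ?_ ?_ <;>
    simp_all [Finset.mem_Icc] <;> omega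


lemma reverse_X_sub_C (r : ℂ) : (X - C r).reverse = 1 - C r * X := by
  ext n
  rcases n with _ | _ | n <;>
    simp [Polynomial.coeff_reverse, Polynomial.natDegree_X_sub_C, Polynomial.revAt,
      Polynomial.coeff_one, Polynomial.coeff_X, Polynomial.coeff_C_mul, Polynomial.coeff_sub]

lemma reverse_prod (s : Multiset ℂ) (h0 : (0:ℂ) ∉ s) :
    ((s.map (fun r => X - C r)).prod).reverse
      = C ((s.map (fun r => -r)).prod) * ((s.map (fun r => X - C r⁻¹)).prod) := by
  induction s using Multiset.induction_on with
  | empty => simp [Polynomial.reverse]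
  | cons a s ih =>
    have ha : a ≠ 0 := fun h => h0 (by simp [h])
    have hs : (0:ℂ) ∉ s := fun h => h0 (Multiset.mem_cons_of_mem h)
    have hmono : ((s.map (fun r => X - C r)).prod).Monic :=
      Polynomial.monic_multiset_prod_of_monic s _ (fun r _ => Polynomial.monic_X_sub_C r)
    simp only [Multiset.map_cons, Multiset.prod_cons]
    rw [Polynomial.reverse_mul (by
      simp [Polynomial.leadingCoeff_X_sub_C, hmono.leadingCoeff])]
    rw [ih hs, reverse_X_sub_C]
    have : (1 : ℂ[X]) - C a * X = C (-a) * (X - C a⁻¹) := by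
      have h1 : (a : ℂ) * a⁻¹ = 1 := mul_inv_cancel₀ ha
      calc (1:ℂ[X]) - C a * X = C (a * a⁻¹) - C a * X := by rw [h1, map_one]
      _ = C (-a) * (X - C a⁻¹) := by rw [map_mul, map_neg]; ring
    rw [this, map_mul]
    ring

local notation "σ" => fun z : ℂ => ((starRingEnd ℂ) z)⁻¹

lemma sigma_inj : Function.Injective (fun z : ℂ => ((starRingEnd ℂ) z)⁻¹) := by
  intro a b h
  exact (starRingEnd ℂ).injective (inv_inj.mp h)

lemma sigma_sigma (z : ℂ) : ((starRingEnd ℂ) (((starRingEnd ℂ) z)⁻¹))⁻¹ = z := by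
  simp [map_inv₀]

lemma sigma_abs (z : ℂ) : ‖(((starRingEnd ℂ) z)⁻¹)‖ = (‖z‖)⁻¹ := by
  simp [map_inv₀]

lemma sigma_fixed {z : ℂ} (hz : ‖z‖ = 1) : ((starRingEnd ℂ) z)⁻¹ = z := by
  apply inv_eq_of_mul_eq_one_right
  rw [mul_comm, Complex.mul_conj, Complex.normSq_eq_norm_sq, hz]
  norm_num

lemma half_of_even (C : Multiset ℂ) (h : ∀ z, Even (C.count z)) :
    ∃ D : Multiset ℂ, C = D + D := by
  refine ⟨C.toFinset.sum (fun z => (C.count z / 2) • ({z} : Multiset ℂ)), ?_⟩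
  ext z
  rw [Multiset.count_add]
  have hc : ∀ w : ℂ, Multiset.count z ((C.count w / 2) • ({w} : Multiset ℂ))
      = (C.count w / 2) * (if z = w then 1 else 0) := by
    intro w
    rw [Multiset.count_nsmul, Multiset.count_singleton]
  have : Multiset.count z (C.toFinset.sum (fun w => (C.count w / 2) • ({w} : Multiset ℂ)))
      = if z ∈ C.toFinset then C.count z / 2 else 0 := by
    rw [Multiset.count_sum']
    rw [Finset.sum_congr rfl (fun w _ => hc w)]
    simp [Finset.sum_ite_eq', mul_ite]
  rw [this]
  by_cases hz : z ∈ C.toFinset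
  · simp only [hz, if_true]
    obtain ⟨m, hm⟩ := h z
    omega
  · simp only [hz, if_false]
    have : Multiset.count z C = 0 := by
      rw [Multiset.count_eq_zero]
      intro hmem; exact hz (Multiset.mem_toFinset.mpr hmem)
    omega

lemma multiset_split (R : Multiset ℂ) (h0 : (0:ℂ) ∉ R)
    (hinv : R.map (fun z : ℂ => ((starRingEnd ℂ) z)⁻¹) = R)
    (heven : ∀ z, ‖z‖ = 1 → Even (R.count z)) :
    ∃ S : Multiset ℂ, S + S.map (fun z : ℂ => ((starRingEnd ℂ) z)⁻¹) = R ∧ (0:ℂ) ∉ S := by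
  set C : Multiset ℂ := R.filter (fun z => ‖z‖ = 1) with hC
  have hCcount : ∀ z, C.count z = if ‖z‖ = 1 then R.count z else 0 := by
    intro z; rw [hC, Multiset.count_filter]
  obtain ⟨D, hD⟩ := half_of_even C (by
    intro z
    rw [hCcount z]
    split
    · exact heven z (by assumption)
    · exact ⟨0, rfl⟩)
  set A : Multiset ℂ := R.filter (fun z => ‖z‖ < 1) with hA
  refine ⟨A + D, ?_, ?_⟩
  · ext z
    have hmapc : Multiset.count z ((A + D).map (fun z : ℂ => ((starRingEnd ℂ) z)⁻¹))
        = Multiset.count (((starRingEnd ℂ) z)⁻¹) (A + D) := by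
      conv_lhs => rw [show z = ((starRingEnd ℂ) (((starRingEnd ℂ) z)⁻¹))⁻¹ from (sigma_sigma z).symm]
      exact Multiset.count_map_eq_count' _ _ sigma_inj _
    rw [Multiset.count_add, hmapc]
    have hinvcount : ∀ w : ℂ, R.count (((starRingEnd ℂ) w)⁻¹) = R.count w := by
      intro w
      conv_lhs => rw [← hinv]
      exact Multiset.count_map_eq_count' _ _ sigma_inj w
    have hDcount : ∀ w : ℂ, D.count w + D.count w = C.count w := by
      intro w; rw [hD, Multiset.count_add]
    have hAcount : ∀ w, A.count w = if ‖w‖ < 1 then R.count w else 0 := by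
      intro w; rw [hA, Multiset.count_filter]
    rw [Multiset.count_add, Multiset.count_add]
    by_cases hz0 : z = 0
    · subst hz0
      have h0c : R.count (0:ℂ) = 0 := Multiset.count_eq_zero.mpr h0
      have hC0 : C.count (0:ℂ) = 0 := by rw [hCcount]; simp [h0c]
      have hD0 : D.count (0:ℂ) = 0 := by have := hDcount 0; omega
      simp only [map_zero, inv_zero]
      simp [hAcount, hD0, h0c]
    · rcases lt_trichotomy (‖z‖) 1 with hlt | heq | hgt
      · have h1 : A.count z = R.count z := by rw [hAcount, if_pos hlt]
        have h2 : C.count z = 0 := by rw [hCcount, if_neg (ne_of_lt hlt)]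
        have h3 : D.count z = 0 := by have := hDcount z; omega
        have habs : ‖(((starRingEnd ℂ) z)⁻¹)‖ = (‖z‖)⁻¹ := sigma_abs z
        have hzpos : 0 < ‖z‖ := by
          simpa [norm_pos_iff] using hz0
        have hgt' : 1 < ‖(((starRingEnd ℂ) z)⁻¹)‖ := by
          rw [habs]; exact (one_lt_inv₀ hzpos).mpr hlt
        have h4 : A.count (((starRingEnd ℂ) z)⁻¹) = 0 := by
          rw [hAcount, if_neg (not_lt.mpr hgt'.le)]
        have h5 : C.count (((starRingEnd ℂ) z)⁻¹) = 0 := by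
          rw [hCcount, if_neg (ne_of_gt hgt')]
        have h6 : D.count (((starRingEnd ℂ) z)⁻¹) = 0 := by have := hDcount (((starRingEnd ℂ) z)⁻¹); omega
        omega
      · have hfix : ((starRingEnd ℂ) z)⁻¹ = z := sigma_fixed heq
        rw [hfix]
        have h1 : A.count z = 0 := by rw [hAcount, if_neg (by rw [heq]; exact lt_irrefl 1)]
        have h2 : C.count z = R.count z := by rw [hCcount, if_pos heq]
        have := hDcount z
        omega
      · have h2 : C.count z = 0 := by rw [hCcount, if_neg (ne_of_gt hgt)]
        have h3 : D.count z = 0 := by have := hDcount z; omega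
        have h1 : A.count z = 0 := by rw [hAcount, if_neg (not_lt.mpr hgt.le)]
        have hlt' : ‖(((starRingEnd ℂ) z)⁻¹)‖ < 1 := by
          rw [sigma_abs]
          exact (inv_lt_one₀ (lt_trans one_pos hgt)).mpr hgt
        have h4 : A.count (((starRingEnd ℂ) z)⁻¹) = R.count (((starRingEnd ℂ) z)⁻¹) := by
          rw [hAcount, if_pos hlt']
        have h5 : C.count (((starRingEnd ℂ) z)⁻¹) = 0 := by
          rw [hCcount, if_neg (ne_of_lt hlt')]
        have h6 : D.count (((starRingEnd ℂ) z)⁻¹) = 0 := by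
          have := hDcount (((starRingEnd ℂ) z)⁻¹); omega
        rw [hinvcount] at h4
        omega
  · intro hmem
    rcases Multiset.mem_add.mp hmem with h | h
    · exact h0 (Multiset.mem_of_mem_filter h)
    · have : (0:ℂ) ∈ C := by rw [hD]; exact Multiset.mem_add.mpr (Or.inl h)
      exact h0 (Multiset.mem_of_mem_filter this)

lemma even_mult (q : Polynomial ℂ) (hq : q ≠ 0) (Nn : ℕ) (T : ℝ → ℂ)
    (hT : ∀ t, 0 ≤ T t)
    (heval : ∀ t : ℝ, q.eval (Complex.exp (t * Complex.I))
      = Complex.exp (((Nn:ℝ):ℂ) * t * Complex.I) * T t)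
    (u : ℂ) (hu : ‖u‖ = 1) : Even (q.rootMultiplicity u) := by
  by_contra hodd
  rw [Nat.not_even_iff_odd] at hodd
  set m := q.rootMultiplicity u with hm
  set g := q /ₘ (X - C u) ^ m with hgdef
  have hfact : (X - C u) ^ m * g = q := Polynomial.pow_mul_divByMonic_rootMultiplicity_eq q u
  have hgu : g.eval u ≠ 0 := Polynomial.eval_divByMonic_pow_rootMultiplicity_ne_zero u hq
  set t0 : ℝ := u.arg with ht0
  have hut0 : Complex.exp ((t0:ℂ) * Complex.I) = u := by
    have := Complex.norm_mul_exp_arg_mul_I u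
    rwa [hu, Complex.ofReal_one, one_mul] at this
  have hu0 : u ≠ 0 := by
    intro h; rw [h] at hu; simp at hu
  have hTre : ∀ t, T t = (((T t).re : ℝ) : ℂ) := by
    intro t
    have him := ((Complex.le_def).mp (hT t)).2
    exact Complex.ext rfl (by simp [← him])
  have hTrepos : ∀ t, 0 ≤ (T t).re := fun t => ((Complex.le_def).mp (hT t)).1
  -- unimodular conjugate trick
  have hconj_exp : ∀ x : ℝ, (starRingEnd ℂ) (Complex.exp ((x:ℂ) * Complex.I))
      * Complex.exp ((x:ℂ) * Complex.I) = 1 := by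
    intro x
    rw [← Complex.exp_conj, ← Complex.exp_add]
    have : (starRingEnd ℂ) ((x:ℂ) * Complex.I) = -((x:ℂ) * Complex.I) := by
      simp [Complex.conj_I, Complex.conj_ofReal]
    rw [this, neg_add_cancel, Complex.exp_zero]
  -- derivative / slope limit
  have hderiv : HasDerivAt (fun t : ℝ => Complex.exp ((t:ℂ) * Complex.I)) (Complex.I * u) t0 := by
    have h1 : HasDerivAt (fun t : ℝ => ((t:ℝ):ℂ)) 1 t0 := by
      simpa using (hasDerivAt_id t0).ofReal_comp
    have h2 := (h1.mul_const Complex.I).cexp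
    convert h2 using 1
    rw [hut0]; ring
  have hslope : Tendsto (fun t : ℝ => (((t:ℂ) - (t0:ℂ)))⁻¹ * (Complex.exp ((t:ℂ) * Complex.I) - u))
      (𝓝[≠] t0) (𝓝 (Complex.I * u)) := by
    have h := hasDerivAt_iff_tendsto_slope.mp hderiv
    refine h.congr' ?_
    filter_upwards with t
    rw [slope_def_module, hut0, Complex.real_smul]
    push_cast
    ring
  set L : ℂ := (starRingEnd ℂ) (Complex.exp ((((Nn:ℝ) * t0 : ℝ):ℂ) * Complex.I)) * g.eval u
      * (Complex.I * u)^m with hL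
  have hLne : L ≠ 0 := by
    apply mul_ne_zero (mul_ne_zero ?_ hgu) (pow_ne_zero _ (mul_ne_zero Complex.I_ne_zero hu0))
    simp [Complex.exp_ne_zero]
  set H : ℝ → ℂ := fun t => (starRingEnd ℂ) (Complex.exp ((((Nn:ℝ) * t : ℝ):ℂ) * Complex.I))
      * g.eval (Complex.exp ((t:ℂ) * Complex.I))
      * ((((t:ℂ) - (t0:ℂ)))⁻¹ * (Complex.exp ((t:ℂ) * Complex.I) - u))^m with hH
  have hHtendsto : Tendsto H (𝓝[≠] t0) (𝓝 L) := by
    apply Tendsto.mul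
    apply Tendsto.mul
    · have cbase : Continuous fun t : ℝ => (((Nn:ℝ) * t : ℝ):ℂ) * Complex.I :=
        (Complex.continuous_ofReal.comp (continuous_const.mul continuous_id)).mul continuous_const
      have c1 : Continuous fun t : ℝ => (starRingEnd ℂ) (Complex.exp ((((Nn:ℝ) * t : ℝ):ℂ) * Complex.I)) :=
        Complex.continuous_conj.comp (Complex.continuous_exp.comp cbase)
      exact (c1.tendsto t0).mono_left nhdsWithin_le_nhds
    · have cinner : Continuous fun t : ℝ => (t:ℂ) * Complex.I :=
        Complex.continuous_ofReal.mul continuous_const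
      have c2 : Continuous fun t : ℝ => g.eval (Complex.exp ((t:ℂ) * Complex.I)) :=
        g.continuous.comp (Complex.continuous_exp.comp cinner)
      have h5 : Tendsto (fun t : ℝ => g.eval (Complex.exp ((t:ℂ) * Complex.I))) (𝓝[≠] t0)
          (𝓝 (g.eval (Complex.exp ((t0:ℂ) * Complex.I)))) :=
        (c2.tendsto t0).mono_left nhdsWithin_le_nhds
      rwa [hut0] at h5
    · exact hslope.pow m
  set ρ : ℝ → ℝ := fun t => (T t).re / (t - t0)^m with hρ
  have hkey : ∀ t : ℝ, t ≠ t0 → H t = ((ρ t : ℝ) : ℂ) := by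
    intro t ht
    set w : ℂ := (t:ℂ) - (t0:ℂ) with hw
    set z : ℂ := Complex.exp ((t:ℂ) * Complex.I) with hzdef
    set e : ℂ := Complex.exp ((((Nn:ℝ) * t : ℝ):ℂ) * Complex.I) with hedef
    have hz : w ≠ 0 := by
      rw [hw]
      intro h
      exact ht (by exact_mod_cast sub_eq_zero.mp h)
    have hwm : w^m ≠ 0 := pow_ne_zero _ hz
    have harg : (((Nn:ℝ) * t : ℝ):ℂ) * Complex.I = ((Nn:ℝ):ℂ) * (t:ℂ) * Complex.I := by
      push_cast; ring
    have h1 : q.eval z = e * T t := by rw [hzdef, heval t, hedef, harg]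
    have h2 : (starRingEnd ℂ) e * e = 1 := hconj_exp _
    have h3 : q.eval z = (z - u)^m * g.eval z := by
      rw [← hfact]; simp
    have hcast : ((ρ t : ℝ):ℂ) = T t / w^m := by
      rw [hρ]
      simp only
      rw [Complex.ofReal_div, Complex.ofReal_pow, Complex.ofReal_sub, ← hTre t, hw]
    rw [hH]
    simp only
    rw [hcast]
    apply mul_right_cancel₀ hwm
    have hl : ((starRingEnd ℂ) e * g.eval z * (w⁻¹ * (z - u))^m) * w^m
        = (starRingEnd ℂ) e * q.eval z := by
      rw [h3, mul_pow, inv_pow]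
      field_simp
    rw [hl, h1, ← mul_assoc, h2, one_mul, div_mul_cancel₀ _ hwm]
  have hρtendsto : Tendsto (fun t => ((ρ t:ℝ):ℂ)) (𝓝[≠] t0) (𝓝 L) := by
    apply hHtendsto.congr'
    filter_upwards [eventually_mem_nhdsWithin] with t ht
    exact hkey t ht
  have hre : Tendsto ρ (𝓝[≠] t0) (𝓝 L.re) := by
    have := (Complex.continuous_re.tendsto L).comp hρtendsto
    simpa [Function.comp_def] using this
  have him0 : L.im = 0 := by
    have h1 := (Complex.continuous_im.tendsto L).comp hρtendsto
    simp only [Function.comp_def, Complex.ofReal_im] at h1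
    exact (tendsto_nhds_unique h1 tendsto_const_nhds)
  have hsub1 : Set.Ioi t0 ⊆ {t0}ᶜ := fun x hx => ne_of_gt hx
  have hsub2 : Set.Iio t0 ⊆ {t0}ᶜ := fun x hx => ne_of_lt hx
  have hge : 0 ≤ L.re := by
    refine ge_of_tendsto (hre.mono_left (nhdsWithin_mono _ hsub1)) ?_
    filter_upwards [self_mem_nhdsWithin] with t ht
    exact div_nonneg (hTrepos t) (pow_pos (sub_pos.mpr ht) m).le
  have hle : L.re ≤ 0 := by
    refine le_of_tendsto (hre.mono_left (nhdsWithin_mono _ hsub2)) ?_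
    filter_upwards [self_mem_nhdsWithin] with t ht
    exact div_nonpos_of_nonneg_of_nonpos (hTrepos t) (Odd.pow_neg hodd (sub_neg.mpr ht)).le
  exact hLne (Complex.ext_iff.mpr ⟨by simpa using le_antisymm hle hge, by simpa using him0⟩)

lemma conj_exp_mul (x : ℝ) : (starRingEnd ℂ) (Complex.exp ((x:ℂ) * Complex.I))
    * Complex.exp ((x:ℂ) * Complex.I) = 1 := by
  rw [← Complex.exp_conj, ← Complex.exp_add]
  have : (starRingEnd ℂ) ((x:ℂ) * Complex.I) = -((x:ℂ) * Complex.I) := by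
    simp [Complex.conj_I, Complex.conj_ofReal]
  rw [this, neg_add_cancel, Complex.exp_zero]

lemma reverse_C_mul (c : ℂ) (p : Polynomial ℂ) (hc : c ≠ 0) :
    (C c * p).reverse = C c * p.reverse := by
  unfold Polynomial.reverse
  rw [Polynomial.natDegree_C_mul hc, Polynomial.reflect_C_mul]

lemma map_conj_eval (p : Polynomial ℂ) (w : ℂ) :
    (p.map (starRingEnd ℂ)).eval w = (starRingEnd ℂ) (p.eval ((starRingEnd ℂ) w)) := by
  rw [Polynomial.eval_map]
  conv_lhs => rw [show w = (starRingEnd ℂ) ((starRingEnd ℂ) w) by simp]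
  exact Polynomial.eval₂_at_apply (starRingEnd ℂ) ((starRingEnd ℂ) w) ▸ by
    rw [Polynomial.eval₂_hom]

lemma FR_main (N : ℕ) (ψ : ℤ → ℂ)
    (hsupp : ∀ n : ℤ, (N : ℤ) < |n| → ψ n = 0)
    (hconj : ∀ n : ℤ, ψ (-n) = (starRingEnd ℂ) (ψ n))
    (hT : ∀ t : ℝ, 0 ≤ ∑ n ∈ Icc (-(N:ℤ)) (N:ℤ), ψ n * Complex.exp ((n:ℂ) * (t:ℂ) * Complex.I))
    (hlead : ψ (N:ℤ) ≠ 0) :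
    ∃ θ : ℤ → ℂ, (∀ k : ℤ, k < 0 ∨ (N : ℤ) < k → θ k = 0) ∧
      ∀ n : ℤ, ψ n = ∑ k ∈ Icc (0 : ℤ) (N : ℤ), θ k * (starRingEnd ℂ) (θ (k - n)) := by
  set T : ℝ → ℂ := fun t => ∑ n ∈ Icc (-(N:ℤ)) (N:ℤ), ψ n * Complex.exp ((n:ℂ) * (t:ℂ) * Complex.I)
    with hTdef
  set q : Polynomial ℂ := ∑ m ∈ range (2*N+1), C (ψ ((m:ℤ) - N)) * X^m with hqdef
  have hcoeff : ∀ m : ℕ, q.coeff m = ψ ((m:ℤ) - N) := by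
    intro m
    rw [hqdef, Polynomial.finset_sum_coeff]
    simp only [Polynomial.coeff_C_mul, Polynomial.coeff_X_pow, mul_ite, mul_one, mul_zero]
    by_cases hm : m < 2*N+1
    · rw [Finset.sum_eq_single_of_mem m (Finset.mem_range.mpr hm)]
      · simp
      · intro i _ hne; rw [if_neg (fun h => hne (by omega))]
    · rw [Finset.sum_eq_zero, hsupp ((m:ℤ) - N) (by rw [_root_.abs_of_nonneg (by omega)]; omega)]
      intro i hi
      rw [if_neg]
      simp only [Finset.mem_range] at hi
      omega
  have hqne : q ≠ 0 := by
    intro h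
    apply hlead
    have h2 := hcoeff (2*N)
    rw [h] at h2
    simp only [Polynomial.coeff_zero] at h2
    have : ((2*N:ℕ):ℤ) - N = N := by push_cast; ring
    rw [this] at h2
    exact h2.symm
  have hdeg : q.natDegree = 2*N := by
    apply le_antisymm
    · rw [Polynomial.natDegree_le_iff_coeff_eq_zero]
      intro m hm
      rw [hcoeff m, hsupp _ (by rw [_root_.abs_of_nonneg (by omega)]; omega)]
    · apply Polynomial.le_natDegree_of_ne_zero
      rw [hcoeff (2*N)]
      have : ((2*N:ℕ):ℤ) - N = N := by push_cast; ring
      rwa [this]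
  have hleadc : q.leadingCoeff = ψ (N:ℤ) := by
    rw [Polynomial.leadingCoeff, hdeg, hcoeff]
    congr 1; push_cast; ring
  have heval : ∀ t : ℝ, q.eval (Complex.exp ((t:ℝ) * Complex.I))
      = Complex.exp (((N:ℝ):ℂ) * (t:ℝ) * Complex.I) * T t := by
    intro t
    rw [hqdef, Polynomial.eval_finset_sum]
    simp only [Polynomial.eval_mul, Polynomial.eval_pow, Polynomial.eval_C, Polynomial.eval_X]
    rw [hTdef]
    simp only
    rw [sum_Icc_shift N (fun n => ψ n * Complex.exp ((n:ℂ) * (t:ℂ) * Complex.I)), Finset.mul_sum]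
    apply Finset.sum_congr rfl
    intro m hm
    rw [show Complex.exp (((N:ℝ):ℂ) * (t:ℝ) * Complex.I)
        * (ψ ((m:ℤ)-N) * Complex.exp (((((m:ℤ)-N):ℤ):ℂ) * (t:ℂ) * Complex.I))
      = ψ ((m:ℤ)-N) * (Complex.exp (((N:ℝ):ℂ) * (t:ℝ) * Complex.I)
        * Complex.exp (((((m:ℤ)-N):ℤ):ℂ) * (t:ℂ) * Complex.I)) from by ring, ← Complex.exp_add]
    congr 2
    · rw [← Complex.exp_nat_mul]
      congr 1
      push_cast
      ring
  have hsplits : q.Splits := IsAlgClosed.splits q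
  set R : Multiset ℂ := q.roots with hRdef
  have hcardR : Multiset.card R = 2*N := by
    rw [hRdef, ← hdeg]
    exact Polynomial.splits_iff_card_roots.mp hsplits
  have hq0val : q.eval 0 ≠ 0 := by
    rw [← Polynomial.coeff_zero_eq_eval_zero, hcoeff 0]
    have h0 : ((0:ℕ):ℤ) - N = -(N:ℤ) := by push_cast; ring
    rw [h0, hconj]
    simpa using hlead
  have hR0 : (0:ℂ) ∉ R := by
    rw [hRdef]
    intro h
    exact hq0val (Polynomial.isRoot_of_mem_roots h)
  have hfactor : q = C (ψ (N:ℤ)) * (R.map (fun r => X - C r)).prod := by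
    conv_lhs => rw [hsplits.eq_prod_roots]
    rw [hleadc]
  have hmapdeg : (q.map (starRingEnd ℂ)).natDegree = 2*N := by
    rw [Polynomial.natDegree_map, hdeg]
  have hsymm : (q.map (starRingEnd ℂ)).reverse = q := by
    apply Polynomial.ext
    intro n
    rw [Polynomial.coeff_reverse, hmapdeg, Polynomial.coeff_map, hcoeff n]
    by_cases hn : n ≤ 2*N
    · rw [Polynomial.revAt_le hn, hcoeff]
      have h1 : ((2*N-n:ℕ):ℤ) - N = -((n:ℤ) - N) := by
        rw [Nat.cast_sub hn]; push_cast; ring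
      rw [h1, hconj ((n:ℤ) - N)]
      exact Complex.conj_conj _
    · rw [Polynomial.revAt_eq_self_of_lt (by omega), hcoeff n,
        hsupp ((n:ℤ)-N) (by rw [_root_.abs_of_nonneg (by omega)]; omega), map_zero]
  have hRinv : R.map (fun z : ℂ => ((starRingEnd ℂ) z)⁻¹) = R := by
    have hmapfact : q.map (starRingEnd ℂ)
        = C ((starRingEnd ℂ) (ψ (N:ℤ))) * ((R.map (starRingEnd ℂ)).map (fun r => X - C r)).prod := by
      conv_lhs => rw [hfactor]
      rw [Polynomial.map_mul, Polynomial.map_C]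
      congr 1
      have hph := Multiset.prod_hom (Multiset.map (fun r => X - C r) R)
        (Polynomial.mapRingHom (starRingEnd ℂ))
      simp only [Polynomial.coe_mapRingHom] at hph
      rw [← hph, Multiset.map_map, Multiset.map_map]
      congr 1
      apply Multiset.map_congr rfl
      intro r hr
      simp
    have h0conj : (0:ℂ) ∉ R.map (starRingEnd ℂ) := by
      intro h
      obtain ⟨r, hr, h0⟩ := Multiset.mem_map.mp h
      exact hR0 (by rwa [show r = 0 from by simpa using h0] at hr)
    have hrev := congrArg Polynomial.reverse hmapfact
    rw [hsymm, reverse_C_mul _ _ (by simpa using hlead), reverse_prod _ h0conj] at hrev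
    have hbne : ((R.map (starRingEnd ℂ)).map (fun r => -r)).prod ≠ 0 := by
      apply Multiset.prod_ne_zero
      intro h
      obtain ⟨r, hr, h0⟩ := Multiset.mem_map.mp h
      obtain ⟨r', hr', h0'⟩ := Multiset.mem_map.mp hr
      apply hR0
      rw [show r' = 0 from by simpa using (h0' ▸ h0 : -(starRingEnd ℂ) r' = 0)] at hr'
      exact hr'
    have hroots := congrArg Polynomial.roots hrev
    rw [← mul_assoc, ← Polynomial.C_mul] at hroots
    rw [Polynomial.roots_C_mul _ (mul_ne_zero (by simpa using hlead) hbne)] at hroots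
    rw [show (Multiset.map (fun r : ℂ => X - C r⁻¹) (R.map (starRingEnd ℂ)))
        = Multiset.map (fun r : ℂ => X - C r) ((R.map (starRingEnd ℂ)).map (fun r : ℂ => r⁻¹))
        from by rw [Multiset.map_map, Multiset.map_map, Multiset.map_map]; rfl] at hroots
    rw [Polynomial.roots_multiset_prod_X_sub_C, Multiset.map_map] at hroots
    exact hroots.symm
  have heven : ∀ z : ℂ, ‖z‖ = 1 → Even (R.count z) := by
    intro z hz
    rw [hRdef, Polynomial.count_roots]
    exact even_mult q hqne N T hT heval z hz
  obtain ⟨S, hSsum, hS0⟩ := multiset_split R hR0 hRinv heven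
  have hScard : Multiset.card S = N := by
    have h := congrArg Multiset.card hSsum
    rw [Multiset.card_add, Multiset.card_map, hcardR] at h
    omega
  set P : Polynomial ℂ := (S.map (fun r => X - C r)).prod with hPdef
  have hPmonic : P.Monic :=
    Polynomial.monic_multiset_prod_of_monic _ _ (fun r _ => Polynomial.monic_X_sub_C r)
  have hPdeg : P.natDegree = N := by
    rw [hPdef, Polynomial.natDegree_multiset_prod_X_sub_C_eq_card, hScard]
  set pZ : ℤ → ℂ := fun k => if 0 ≤ k then P.coeff k.toNat else 0 with hpZdef
  have hpZ0 : ∀ k : ℤ, k < 0 ∨ (N:ℤ) < k → pZ k = 0 := by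
    intro k hk
    rcases hk with hk | hk
    · rw [hpZdef]; simp only; rw [if_neg (by omega)]
    · rw [hpZdef]; simp only; rw [if_pos (by omega)]
      apply Polynomial.coeff_eq_zero_of_natDegree_lt
      rw [hPdeg]; omega
  set Pt : Polynomial ℂ := (P.map (starRingEnd ℂ)).reverse with hPtdef
  have hPmapdeg : (P.map (starRingEnd ℂ)).natDegree = N := by
    rw [Polynomial.natDegree_map, hPdeg]
  have hPtcoeff : ∀ j : ℕ, Pt.coeff j = (starRingEnd ℂ) (pZ ((N:ℤ) - j)) := by
    intro j
    rw [hPtdef, Polynomial.coeff_reverse, hPmapdeg, Polynomial.coeff_map]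
    by_cases hj : j ≤ N
    · rw [Polynomial.revAt_le hj]
      congr 1
      rw [hpZdef]; simp only; rw [if_pos (by omega)]
      congr 1
      omega
    · rw [Polynomial.revAt_eq_self_of_lt (by omega),
        Polynomial.coeff_eq_zero_of_natDegree_lt (by rw [hPdeg]; omega),
        hpZ0 _ (Or.inl (by omega)), map_zero]
  have hPconjfact : P.map (starRingEnd ℂ) = ((S.map (starRingEnd ℂ)).map (fun r => X - C r)).prod := by
    rw [hPdef]
    have hph := Multiset.prod_hom (Multiset.map (fun r => X - C r) S)
      (Polynomial.mapRingHom (starRingEnd ℂ))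
    simp only [Polynomial.coe_mapRingHom] at hph
    rw [← hph, Multiset.map_map, Multiset.map_map]
    congr 1
    apply Multiset.map_congr rfl
    intro r hr
    simp
  have h0Sconj : (0:ℂ) ∉ S.map (starRingEnd ℂ) := by
    intro h
    obtain ⟨r, hr, h0⟩ := Multiset.mem_map.mp h
    exact hS0 (by rwa [show r = 0 from by simpa using h0] at hr)
  have hPtfact : Pt = C (((S.map (starRingEnd ℂ)).map (fun r => -r)).prod)
      * (((S.map (starRingEnd ℂ)).map (fun r => X - C r⁻¹)).prod) := by
    rw [hPtdef, hPconjfact, reverse_prod _ h0Sconj]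
  set b : ℂ := ((S.map (starRingEnd ℂ)).map (fun r => -r)).prod with hbdef
  have hbne : b ≠ 0 := by
    rw [hbdef]
    apply Multiset.prod_ne_zero
    intro h
    obtain ⟨r, hr, h0⟩ := Multiset.mem_map.mp h
    obtain ⟨r', hr', h0'⟩ := Multiset.mem_map.mp hr
    apply hS0
    rw [show r' = 0 from by simpa using (h0' ▸ h0 : -(starRingEnd ℂ) r' = 0)] at hr'
    exact hr'
  have hQ : ((S.map (fun z : ℂ => ((starRingEnd ℂ) z)⁻¹)).map (fun r => X - C r)).prod
      = C b⁻¹ * Pt := by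
    rw [hPtfact, ← mul_assoc, ← Polynomial.C_mul, inv_mul_cancel₀ hbne,
      Polynomial.C_1, one_mul, Multiset.map_map, Multiset.map_map]
    rfl
  have hqPP : q = C (ψ (N:ℤ) * b⁻¹) * (P * Pt) := by
    conv_lhs => rw [hfactor, ← hSsum]
    rw [Multiset.map_add, Multiset.prod_add, hQ, ← hPdef, Polynomial.C_mul]
    ring
  have hcoeffPP : ∀ Mn : ℕ, (P * Pt).coeff Mn
      = ∑ k ∈ Icc (0:ℤ) (N:ℤ), pZ k * (starRingEnd ℂ) (pZ (k - ((Mn:ℤ) - N))) := by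
    intro Mn
    rw [Polynomial.coeff_mul, Finset.Nat.sum_antidiagonal_eq_sum_range_succ_mk]
    have hterm : ∀ i ∈ range (Mn+1), P.coeff i * Pt.coeff (Mn - i)
        = pZ (i:ℤ) * (starRingEnd ℂ) (pZ ((i:ℤ) - ((Mn:ℤ) - N))) := by
      intro i hi
      simp only [Finset.mem_range] at hi
      have e1 : P.coeff i = pZ (i:ℤ) := by
        simp only [hpZdef]
        rw [if_pos (by omega : (0:ℤ) ≤ (i:ℤ))]
        congr 1
      have e2 : ((N:ℤ) - ((Mn - i:ℕ):ℤ)) = (i:ℤ) - ((Mn:ℤ) - N) := by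
        rw [Nat.cast_sub (by omega)]
        ring
      rw [hPtcoeff (Mn - i), e2, e1]
    rw [Finset.sum_congr rfl hterm,
      ← sum_Icc_int Mn (fun k => pZ k * (starRingEnd ℂ) (pZ (k - ((Mn:ℤ) - N))))]
    have hFzero : ∀ k : ℤ, ((N:ℤ) < k ∨ (Mn:ℤ) < k) →
        pZ k * (starRingEnd ℂ) (pZ (k - ((Mn:ℤ) - N))) = 0 := by
      intro k hk
      rcases hk with hk | hk
      · rw [hpZ0 k (Or.inr hk), zero_mul]
      · by_cases hkN : (N:ℤ) < k
        · rw [hpZ0 k (Or.inr hkN), zero_mul]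
        · rw [hpZ0 (k - ((Mn:ℤ) - N)) (Or.inr (by omega)), map_zero, mul_zero]
    have h1 : ∑ k ∈ Icc (0:ℤ) (Mn:ℤ), pZ k * (starRingEnd ℂ) (pZ (k - ((Mn:ℤ) - N)))
        = ∑ k ∈ Icc (0:ℤ) ((max Mn N : ℕ):ℤ), pZ k * (starRingEnd ℂ) (pZ (k - ((Mn:ℤ) - N))) := by
      apply Finset.sum_subset
      · intro x hx
        simp only [Finset.mem_Icc, Nat.cast_max] at *
        omega
      · intro x hx hnx
        simp only [Finset.mem_Icc, Nat.cast_max] at hx hnx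
        exact hFzero x (Or.inr (by omega))
    have h2 : ∑ k ∈ Icc (0:ℤ) ((N:ℕ):ℤ), pZ k * (starRingEnd ℂ) (pZ (k - ((Mn:ℤ) - N)))
        = ∑ k ∈ Icc (0:ℤ) ((max Mn N : ℕ):ℤ), pZ k * (starRingEnd ℂ) (pZ (k - ((Mn:ℤ) - N))) := by
      apply Finset.sum_subset
      · intro x hx
        simp only [Finset.mem_Icc, Nat.cast_max] at *
        omega
      · intro x hx hnx
        simp only [Finset.mem_Icc, Nat.cast_max] at hx hnx
        exact hFzero x (Or.inl (by omega))
    rw [h1, ← h2]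
  have hexists_t : ∃ t : ℝ, q.eval (Complex.exp ((t:ℝ) * Complex.I)) ≠ 0 := by
    by_contra hall
    push_neg at hall
    have hinj : Set.InjOn (fun t : ℝ => Complex.exp ((t:ℝ) * Complex.I)) (Set.Ioo 0 1) := by
      intro s hs t ht h
      simp only at h
      obtain ⟨n, hn⟩ := Complex.exp_eq_exp_iff_exists_int.mp h
      have h2 : (s:ℂ) = t + n * (2*(Real.pi:ℝ)) := by
        apply mul_right_cancel₀ Complex.I_ne_zero
        rw [hn]
        push_cast
        ring
      have h3 : (s:ℝ) = t + n * (2*Real.pi) := by exact_mod_cast h2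
      simp only [Set.mem_Ioo] at hs ht
      have hpi := Real.pi_gt_three
      have hn0 : n = 0 := by
        rcases lt_trichotomy n 0 with hc | hc | hc
        · exfalso
          have hneg : (n:ℝ) ≤ -1 := by exact_mod_cast (by omega : n ≤ -1)
          have hmul : (n:ℝ) * (2*Real.pi) ≤ (-1) * (2*Real.pi) :=
            mul_le_mul_of_nonneg_right hneg (by positivity)
          linarith [hs.1, hs.2, ht.1, ht.2]
        · exact hc
        · exfalso
          have hpos : (1:ℝ) ≤ (n:ℝ) := by exact_mod_cast (by omega : 1 ≤ n)
          have hmul : (1:ℝ) * (2*Real.pi) ≤ (n:ℝ) * (2*Real.pi) :=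
            mul_le_mul_of_nonneg_right hpos (by positivity)
          linarith [hs.1, hs.2, ht.1, ht.2]
      rw [hn0] at h3
      push_cast at h3
      linarith
    have hfin := q.finite_setOf_isRoot hqne
    have hinf : Set.Infinite ((fun t : ℝ => Complex.exp ((t:ℝ) * Complex.I)) '' (Set.Ioo 0 1)) :=
      Set.Infinite.image hinj (Set.Ioo_infinite zero_lt_one)
    apply hinf
    apply Set.Finite.subset hfin
    rintro z ⟨t, ht, rfl⟩
    exact hall t
  obtain ⟨t1, ht1⟩ := hexists_t
  set z1 : ℂ := Complex.exp ((t1:ℝ) * Complex.I) with hz1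
  have hz1abs : ‖z1‖ = 1 := Complex.norm_exp_ofReal_mul_I t1
  have hz1ne : z1 ≠ 0 := by
    intro h; rw [h] at hz1abs; simp at hz1abs
  have hTt1 : T t1 ≠ 0 := by
    intro h
    apply ht1
    rw [heval t1, h, mul_zero]
  have hPz1 : P.eval z1 ≠ 0 := by
    intro h
    apply ht1
    rw [hqPP]
    simp [h]
  have hPtz1 : Pt.eval z1 = (starRingEnd ℂ) (P.eval z1) * z1^N := by
    have hinv1 : Invertible (z1⁻¹) := invertibleOfNonzero (inv_ne_zero hz1ne)
    have hrev := Polynomial.eval₂_reverse_mul_pow (RingHom.id ℂ) (z1⁻¹) (P.map (starRingEnd ℂ))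
    rw [invOf_eq_inv, inv_inv, hPmapdeg] at hrev
    have hrev2 : Pt.eval z1 * (z1⁻¹)^N = (P.map (starRingEnd ℂ)).eval (z1⁻¹) := hrev
    have hconjinv : (starRingEnd ℂ) (z1⁻¹) = z1 := by
      rw [map_inv₀]
      exact sigma_fixed hz1abs
    rw [map_conj_eval, hconjinv] at hrev2
    calc Pt.eval z1 = (Pt.eval z1 * (z1⁻¹)^N) * z1^N := by
          rw [mul_assoc, inv_pow, inv_mul_cancel₀ (pow_ne_zero N hz1ne), mul_one]
    _ = (starRingEnd ℂ) (P.eval z1) * z1^N := by rw [hrev2]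
  have hz1Npow : z1^N = Complex.exp (((N:ℝ):ℂ) * t1 * Complex.I) := by
    rw [hz1, ← Complex.exp_nat_mul]
    congr 1
    push_cast
    ring
  have hTt1eq : T t1 = (ψ (N:ℤ) * b⁻¹) * ((Complex.normSq (P.eval z1) : ℝ) : ℂ) := by
    apply mul_left_cancel₀ (Complex.exp_ne_zero (((N:ℝ):ℂ) * t1 * Complex.I))
    rw [← heval t1, hqPP]
    rw [Polynomial.eval_mul, Polynomial.eval_mul, Polynomial.eval_C, hPtz1]
    rw [show P.eval z1 * ((starRingEnd ℂ) (P.eval z1) * z1 ^ N)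
        = P.eval z1 * (starRingEnd ℂ) (P.eval z1) * z1 ^ N from by ring,
      Complex.mul_conj, hz1Npow]
    ring
  have hTreq : T t1 = (((T t1).re : ℝ) : ℂ) := by
    have him := ((Complex.le_def).mp (hT t1)).2
    exact Complex.ext rfl (by rw [Complex.ofReal_im, ← him, Complex.zero_im])
  have hTrepos : 0 < (T t1).re := by
    have h1 := ((Complex.le_def).mp (hT t1)).1
    rw [Complex.zero_re] at h1
    refine lt_of_le_of_ne h1 fun heq => hTt1 ?_
    rw [hTreq, ← heq, Complex.ofReal_zero]
  set γr : ℝ := (T t1).re / Complex.normSq (P.eval z1) with hγrdef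
  have hγrpos : 0 < γr := div_pos hTrepos (Complex.normSq_pos.mpr hPz1)
  have hγeq : ψ (N:ℤ) * b⁻¹ = ((γr : ℝ) : ℂ) := by
    rw [hγrdef, Complex.ofReal_div, ← hTreq, hTt1eq]
    rw [mul_div_assoc, div_self (by exact_mod_cast (Complex.normSq_pos.mpr hPz1).ne'), mul_one]
  set c : ℝ := Real.sqrt γr with hcdef
  have hc2 : (c:ℂ) * (starRingEnd ℂ) (c:ℂ) = ((γr:ℝ):ℂ) := by
    rw [Complex.conj_ofReal, ← Complex.ofReal_mul, Real.mul_self_sqrt hγrpos.le]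
  refine ⟨fun k => (c:ℂ) * pZ k, ?_, ?_⟩
  · intro k hk
    show (c:ℂ) * pZ k = 0
    rw [hpZ0 k hk, mul_zero]
  · intro n
    have hsum : ∑ k ∈ Icc (0:ℤ) (N:ℤ), ((c:ℂ) * pZ k) * (starRingEnd ℂ) ((c:ℂ) * pZ (k - n))
        = (ψ (N:ℤ) * b⁻¹) * ∑ k ∈ Icc (0:ℤ) (N:ℤ), pZ k * (starRingEnd ℂ) (pZ (k - n)) := by
      rw [hγeq, Finset.mul_sum]
      apply Finset.sum_congr rfl
      intro k hk
      rw [map_mul, ← hc2]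
      ring
    rw [hsum]
    by_cases hn : -(N:ℤ) ≤ n ∧ n ≤ (N:ℤ)
    · have h1 : ψ n = q.coeff ((n+N).toNat) := by
        rw [hcoeff]
        congr 1
        omega
      have h2 : (((n+N).toNat : ℕ):ℤ) - N = n := by omega
      rw [h1, hqPP, Polynomial.coeff_C_mul, hcoeffPP, h2]
    · rw [hsupp n (by rcases abs_cases n with ⟨ha1,ha2⟩ | ⟨ha1,ha2⟩ <;> omega),
        Finset.sum_eq_zero, mul_zero]
      intro k hk
      simp only [Finset.mem_Icc] at hk
      by_cases hn2 : (N:ℤ) < n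
      · rw [hpZ0 (k - n) (Or.inl (by omega)), map_zero, mul_zero]
      · rw [hpZ0 (k - n) (Or.inr (by omega)), map_zero, mul_zero]



lemma FR_all : ∀ (N : ℕ) (ψ : ℤ → ℂ),
    (∀ n : ℤ, (N : ℤ) < |n| → ψ n = 0) →
    (∀ n : ℤ, ψ (-n) = (starRingEnd ℂ) (ψ n)) →
    (∀ t : ℝ, 0 ≤ ∑ n ∈ Icc (-(N:ℤ)) (N:ℤ), ψ n * Complex.exp ((n:ℂ) * (t:ℂ) * Complex.I)) →
    ∃ θ : ℤ → ℂ, (∀ k : ℤ, k < 0 ∨ (N : ℤ) < k → θ k = 0) ∧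
      ∀ n : ℤ, ψ n = ∑ k ∈ Icc (0 : ℤ) (N : ℤ), θ k * (starRingEnd ℂ) (θ (k - n)) := by
  intro N
  induction N with
  | zero =>
    intro ψ hsupp hconj hT
    by_cases hlead : ψ ((0:ℕ):ℤ) ≠ 0
    · exact FR_main 0 ψ hsupp hconj hT hlead
    · push_neg at hlead
      refine ⟨fun _ => 0, fun _ _ => rfl, ?_⟩
      intro n
      rw [Finset.sum_eq_zero (fun k _ => by rw [zero_mul])]
      rcases eq_or_ne n 0 with rfl | hn
      · simpa using hlead
      · exact hsupp n (by simpa using abs_pos.mpr hn)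
  | succ N ih =>
    intro ψ hsupp hconj hT
    by_cases hlead : ψ (((N+1):ℕ):ℤ) ≠ 0
    · exact FR_main (N+1) ψ hsupp hconj hT hlead
    · push_neg at hlead
      have hsupp' : ∀ n : ℤ, (N:ℤ) < |n| → ψ n = 0 := by
        intro n hn
        by_cases h1 : (((N+1):ℕ):ℤ) < |n|
        · exact hsupp n h1
        · push_cast at h1 hn
          rcases abs_cases n with ⟨ha1, ha2⟩ | ⟨ha1, ha2⟩
          · have : n = (N:ℤ)+1 := by omega
            rw [this]
            exact_mod_cast hlead
          · have : n = -((N:ℤ)+1) := by omega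
            rw [this]
            have h2 := hconj ((N:ℤ)+1)
            rw [h2, show ψ ((N:ℤ)+1) = 0 from by exact_mod_cast hlead, map_zero]
      have hT' : ∀ t : ℝ, 0 ≤ ∑ n ∈ Icc (-(N:ℤ)) (N:ℤ),
          ψ n * Complex.exp ((n:ℂ) * (t:ℂ) * Complex.I) := by
        intro t
        have h := hT t
        have hsub : Icc (-(N:ℤ)) (N:ℤ) ⊆ Icc (-((((N+1):ℕ)):ℤ)) ((((N+1):ℕ)):ℤ) := by
          intro x hx
          simp only [Finset.mem_Icc] at hx ⊢
          push_cast
          omega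
        have hvan : ∀ x ∈ Icc (-((((N+1):ℕ)):ℤ)) ((((N+1):ℕ)):ℤ),
            x ∉ Icc (-(N:ℤ)) (N:ℤ) → ψ x * Complex.exp ((x:ℂ) * (t:ℂ) * Complex.I) = 0 := by
          intro x hx hnx
          simp only [Finset.mem_Icc] at hx hnx
          rw [hsupp' x (by rcases abs_cases x with ⟨h1,h2⟩|⟨h1,h2⟩ <;> omega), zero_mul]
        rwa [← Finset.sum_subset hsub hvan] at h
      obtain ⟨θ, hθ1, hθ2⟩ := ih ψ hsupp' hconj hT'
      refine ⟨θ, fun k hk => hθ1 k (by push_cast at hk ⊢; omega), ?_⟩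
      intro n
      rw [hθ2 n]
      apply Finset.sum_subset
      · intro x hx
        simp only [Finset.mem_Icc] at hx ⊢
        push_cast at hx ⊢
        omega
      · intro x hx hnx
        simp only [Finset.mem_Icc] at hx hnx
        push_cast at hx hnx
        rw [hθ1 x (by omega), zero_mul]

theorem stmt10 (N : ℕ) (ψ : ℤ → ℂ) (hsupp : ∀ n : ℤ, (N : ℤ) < |n| → ψ n = 0)
    (hψ : IsPosDef ψ) :
    ∃ θ : ℤ → ℂ, (∀ k : ℤ, k < 0 ∨ (N : ℤ) < k → θ k = 0) ∧
      ∀ n : ℤ, ψ n = ∑ k ∈ Finset.Icc (0 : ℤ) (N : ℤ),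
        θ k * (starRingEnd ℂ) (θ (k - n)) := by
  exact FR_all N ψ hsupp (conj_symm hψ) (T_nonneg hψ hsupp)
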